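/- Let Λ be a linear chain lattice with weights -a_1,...,-a_k (a_i ≥ 2) embedded into ⟨-1⟩^t so that no (-1)-vector lies in the orthogonal complement of the image. Then t ≤ 1 + Σ_{i=1}^{k}(a_i - 1). -/
import Mathlib


open Matrix

lemma union_card_le {t : ℕ} (S : ℕ → Finset (Fin t))
    (hchain : ∀ i, ((S i) ∩ (S (i+1))).Nonempty) :
    ∀ n, ((Finset.range n).biUnion S).card ≤ 1 + ∑ i ∈ Finset.range n, ((S i).card - 1) := by
  intro n
  induction n with
  | zero => simp
  | succ n ih =>
    rw [Finset.sum_range_succ, Finset.range_add_one, Finset.biUnion_insert, Finset.union_comm]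
    rcases Nat.eq_zero_or_pos n with rfl | hn
    · simp only [Finset.range_zero, Finset.biUnion_empty, Finset.empty_union,
        Finset.sum_empty]
      omega
    · obtain ⟨x, hx⟩ := hchain (n-1)
      rw [Finset.mem_inter] at hx
      have hx2 : x ∈ S n := by
        have : n - 1 + 1 = n := by omega
        rw [this] at hx; exact hx.2
      have hxU : x ∈ (Finset.range n).biUnion S :=
        Finset.mem_biUnion.2 ⟨n-1, Finset.mem_range.2 (by omega), hx.1⟩
      have h1 : ((Finset.range n).biUnion S ∪ S n).card
          = ((Finset.range n).biUnion S).card + (S n \ (Finset.range n).biUnion S).card := by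
        rw [← Finset.union_sdiff_self_eq_union,
          Finset.card_union_of_disjoint Finset.disjoint_sdiff]
      have h2 : (S n \ (Finset.range n).biUnion S) ⊆ (S n).erase x := by
        intro y hy
        rw [Finset.mem_sdiff] at hy
        refine Finset.mem_erase.2 ⟨?_, hy.1⟩
        rintro rfl; exact hy.2 hxU
      have h3 := Finset.card_le_card h2
      rw [Finset.card_erase_of_mem hx2] at h3
      omega


/-- The intersection matrix of a linear chain with weights `-a i`
(`1`'s on the super- and sub-diagonal). -/
def chainM {k : ℕ} (a : Fin k → ℕ) : Matrix (Fin k) (Fin k) ℤ :=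
  Matrix.of fun i j =>
    if i = j then -(a i : ℤ)
    else if (i : ℕ) + 1 = (j : ℕ) ∨ (j : ℕ) + 1 = (i : ℕ) then 1 else 0

/-- The bilinear form of the standard negative diagonal lattice `⟨-1⟩ᵗ`. -/
def negDot {t : ℕ} (x y : Fin t → ℤ) : ℤ := -(x ⬝ᵥ y)

theorem stmt9 {k t : ℕ} (a : Fin k → ℕ) (ha : ∀ i, 2 ≤ a i)
    (f : (Fin k → ℤ) →ₗ[ℤ] (Fin t → ℤ))
    (hinj : Function.Injective f)
    (hform : ∀ x y : Fin k → ℤ, negDot (f x) (f y) = x ⬝ᵥ (chainM a).mulVec y)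
    (hirr : ∀ z : Fin t → ℤ, (∀ x : Fin k → ℤ, negDot z (f x) = 0) → negDot z z ≠ -1) :
    t ≤ 1 + ∑ i, (a i - 1) := by
  set v : Fin k → (Fin t → ℤ) := fun i => f (Pi.single i 1) with hv
  have hdot : ∀ i j : Fin k, v i ⬝ᵥ v j = -(chainM a i j) := by
    intro i j
    calc v i ⬝ᵥ v j = -negDot (f (Pi.single i 1)) (f (Pi.single j 1)) := by
          simp [negDot, hv]
      _ = -(Pi.single i 1 ⬝ᵥ (chainM a).mulVec (Pi.single j 1)) := by rw [hform]
      _ = -chainM a i j := by simp [Matrix.mulVec_single]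
  have hself : ∀ i, ∑ j, v i j * v i j = (a i : ℤ) := by
    intro i
    have hd := hdot i i
    have hc : chainM a i i = -(a i) := by simp [chainM]
    rw [hc, neg_neg, dotProduct] at hd
    exact hd
  have hfx : ∀ x : Fin k → ℤ, f x = ∑ i, x i • v i := by
    intro x
    have hx : x = ∑ i, x i • Pi.single i (1:ℤ) := by
      funext l
      simp [Finset.sum_apply, Pi.single_apply, eq_comm]
    conv_lhs => rw [hx]
    rw [map_sum]
    simp only [_root_.map_smul, hv]
  have hcover : ∀ j : Fin t, ∃ i : Fin k, v i j ≠ 0 := by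
    intro j
    by_contra h
    push_neg at h
    refine hirr (Pi.single j 1) ?_ ?_
    · intro x
      simp [negDot, single_dotProduct, hfx, Finset.sum_apply, Pi.smul_apply,
        smul_eq_mul, h]
    · simp [negDot]
  set S : Fin k → Finset (Fin t) := fun i => Finset.univ.filter (fun j => v i j ≠ 0) with hS
  have hcard : ∀ i, (S i).card ≤ a i := by
    intro i
    have h1 : ((S i).card : ℤ) ≤ ∑ j, v i j * v i j := by
      calc ((S i).card : ℤ) = ∑ j ∈ S i, 1 := by simp
        _ ≤ ∑ j ∈ S i, v i j * v i j := by
            apply Finset.sum_le_sum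
            intro j hj
            have hj' : v i j ≠ 0 := by simpa [hS] using hj
            nlinarith [Int.one_le_abs hj', abs_nonneg (v i j), abs_mul_abs_self (v i j)]
        _ ≤ ∑ j, v i j * v i j := by
            apply Finset.sum_le_sum_of_subset_of_nonneg (Finset.filter_subset _ _)
            intro j _ _
            exact mul_self_nonneg _
    rw [hself i] at h1
    exact_mod_cast h1
  rcases Nat.eq_zero_or_pos k with rfl | hk
  · have : t = 0 := by
      by_contra h
      obtain ⟨i, _⟩ := hcover ⟨0, Nat.pos_of_ne_zero h⟩
      exact i.elim0
    omega
  set S' : ℕ → Finset (Fin t) := fun n => if h : n < k then S ⟨n, h⟩ else S ⟨k-1, by omega⟩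
    with hS'
  have hne : ∀ i : Fin k, (S i).Nonempty := by
    intro i
    by_contra h
    rw [Finset.not_nonempty_iff_eq_empty] at h
    have hz : ∀ j, v i j = 0 := by
      intro j
      by_contra hj
      have : j ∈ S i := by simp [hS, hj]
      simp [h] at this
    have h2 := hself i
    simp only [hz, mul_zero, Finset.sum_const_zero] at h2
    have := ha i
    omega
  have hchain : ∀ n, (S' n ∩ S' (n+1)).Nonempty := by
    intro n
    by_cases h1 : n + 1 < k
    · have h0 : n < k := by omega
      have hd : v ⟨n, h0⟩ ⬝ᵥ v ⟨n+1, h1⟩ = -1 := by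
        rw [hdot]
        simp [chainM, Fin.ext_iff]
      have : ∃ j, v ⟨n, h0⟩ j * v ⟨n+1, h1⟩ j ≠ 0 := by
        by_contra hc
        push_neg at hc
        rw [dotProduct] at hd
        simp [hc] at hd
      obtain ⟨j, hj⟩ := this
      refine ⟨j, Finset.mem_inter.2 ⟨?_, ?_⟩⟩
      · simp only [hS', dif_pos h0]
        simp only [hS, Finset.mem_filter, Finset.mem_univ, true_and]
        intro h; rw [h] at hj; simp at hj
      · simp only [hS', dif_pos h1]
        simp only [hS, Finset.mem_filter, Finset.mem_univ, true_and]
        intro h; rw [h] at hj; simp at hj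
    · have e1 : S' n = S' (n+1) := by
        by_cases h0 : n < k
        · have hn1 : n = k - 1 := by omega
          simp only [hS', dif_pos h0, dif_neg h1]
          congr 1
          exact Fin.ext hn1
        · simp [hS', dif_neg h0, dif_neg h1]
      rw [← e1, Finset.inter_self]
      by_cases h0 : n < k
      · simp only [hS', dif_pos h0]; exact hne _
      · simp only [hS', dif_neg h0]; exact hne _
  have hU : Finset.univ ⊆ (Finset.range k).biUnion S' := by
    intro j _
    obtain ⟨i, hi⟩ := hcover j
    refine Finset.mem_biUnion.2 ⟨i.1, Finset.mem_range.2 i.2, ?_⟩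
    simp only [hS', dif_pos i.2]
    simp [hS, hi]
  have hmain := union_card_le S' hchain k
  have ht : t ≤ ((Finset.range k).biUnion S').card := by
    have := Finset.card_le_card hU
    simpa using this
  have hsum : ∑ i ∈ Finset.range k, ((S' i).card - 1) ≤ ∑ i, (a i - 1) := by
    rw [Finset.sum_range fun i => ((S' i).card - 1)]
    apply Finset.sum_le_sum
    intro i _
    have : S' (i : ℕ) = S i := by
      simp only [hS', dif_pos i.2]
    rw [this]
    exact Nat.sub_le_sub_right (hcard i) 1
  omega
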